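/- arXiv:1907.00896 — 2 statements merged into one kernel-verified Lean document; each statement's English description precedes it below -/
import Mathlib

section
/- Let r, q ≥ 1 and let P_i = (a_{i,1}, …, a_{i,r}) ∈ ℝ^r, i = 1, …, q, be nonzero vectors with nonnegative coordinates. Suppose that for every subset T ⊊ {1, …, r} of cardinality t, at most t·⌊q/r⌋ of the vectors P_i have support contained in T (i.e., a_{i,j} = 0 for all j ∉ T). Then there exist pairwise disjoint subsets I_1, …, I_{⌊q/r⌋} of {1, …, q}, each of cardinality r, such that for every j = 1, …, ⌊q/r⌋ the vector Σ_{i ∈ I_j} P_i has all coordinates strictly positive. -/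
open scoped Classical

/-- Lemma 3.1: nonzero vectors `P i ∈ ℝ^r` with nonnegative coordinates such that
for every proper subset `T ⊊ {1,…,r}` at most `#T·⌊q/r⌋` of the `P i` are
supported on `T` can be partitioned into `⌊q/r⌋` pairwise disjoint `r`-element
index sets on each of which the sum of the vectors has all coordinates positive. -/
theorem stmt_8 (r q : ℕ) (hr : 1 ≤ r) (hq : 1 ≤ q)
    (a : Fin q → Fin r → ℝ)
    (hnonneg : ∀ i j, 0 ≤ a i j)
    (hnz : ∀ i, ∃ j, a i j ≠ 0)
    (hsupp : ∀ T : Finset (Fin r), T ≠ Finset.univ →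
      (Finset.univ.filter fun i => ∀ j, j ∉ T → a i j = 0).card ≤ T.card * (q / r)) :
    ∃ I : Fin (q / r) → Finset (Fin q),
      (∀ k k', k ≠ k' → Disjoint (I k) (I k')) ∧
      (∀ k, (I k).card = r) ∧
      (∀ k, ∀ j : Fin r, 0 < ∑ i ∈ I k, a i j) := by
  set m := q / r with hm
  -- Hall's theorem setup
  set t : Fin m × Fin r → Finset (Fin q) :=
    fun p => Finset.univ.filter (fun i => 0 < a i p.2) with ht
  have hall : ∀ s : Finset (Fin m × Fin r), s.card ≤ (s.biUnion t).card := by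
    intro s
    rcases s.eq_empty_or_nonempty with hs | hs
    · simp [hs]
    set U : Finset (Fin r) := s.image Prod.snd with hU
    have hUne : U.Nonempty := hs.image _
    have hUcard : U.card ≤ r := le_trans (Finset.card_le_univ U) (by simp)
    -- s.card ≤ m * U.card
    have h1 : s.card ≤ m * U.card := by
      calc s.card ≤ ((Finset.univ : Finset (Fin m)) ×ˢ U).card := by
            apply Finset.card_le_card
            intro p hp
            simp only [Finset.mem_product, Finset.mem_univ, true_and]
            exact Finset.mem_image_of_mem Prod.snd hp
        _ = m * U.card := by simp [Finset.card_product]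
    -- A = vectors supported on Uᶜ
    set A : Finset (Fin q) :=
      Finset.univ.filter (fun i => ∀ j, j ∉ Uᶜ → a i j = 0) with hA
    have hT : (Uᶜ : Finset (Fin r)) ≠ Finset.univ := by
      intro h
      obtain ⟨j, hj⟩ := hUne
      have : j ∈ (Uᶜ : Finset (Fin r)) := h ▸ Finset.mem_univ j
      exact (Finset.mem_compl.mp this) hj
    have h2 : A.card ≤ (r - U.card) * m := by
      have := hsupp Uᶜ hT
      rwa [Finset.card_compl, Fintype.card_fin] at this
    -- Aᶜ ⊆ biUnion
    have h3 : (Aᶜ : Finset (Fin q)) ⊆ s.biUnion t := by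
      intro i hi
      rw [Finset.mem_compl, hA, Finset.mem_filter] at hi
      push_neg at hi
      obtain ⟨j, hj, hij⟩ := hi (Finset.mem_univ i)
      rw [Finset.notMem_compl] at hj
      obtain ⟨p, hp, hpj⟩ := Finset.mem_image.mp hj
      refine Finset.mem_biUnion.mpr ⟨p, hp, ?_⟩
      rw [ht]
      simp only [Finset.mem_filter, Finset.mem_univ, true_and]
      rw [hpj]
      exact lt_of_le_of_ne (hnonneg i j) (Ne.symm hij)
    have h4 : q - A.card ≤ (s.biUnion t).card := by
      have := Finset.card_le_card h3
      rwa [Finset.card_compl, Fintype.card_fin] at this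
    have h5 : m * U.card + (r - U.card) * m ≤ q := by
      have : m * U.card + (r - U.card) * m = m * r := by
        rw [Nat.mul_comm (r - U.card) m, ← Nat.mul_add,
          Nat.add_sub_cancel' hUcard]
      rw [this, hm, Nat.mul_comm (q/r) r]
      rw [Nat.mul_comm]
      exact Nat.div_mul_le_self q r
    have h6 : s.card + A.card ≤ q :=
      le_trans (Nat.add_le_add h1 h2) h5
    exact le_trans (Nat.le_sub_of_add_le h6) h4
  obtain ⟨f, hfinj, hft⟩ :=
    (Finset.all_card_le_biUnion_card_iff_exists_injective t).mp hall
  refine ⟨fun k => Finset.univ.image (fun j => f (k, j)), ?_, ?_, ?_⟩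
  · intro k k' hkk'
    rw [Finset.disjoint_left]
    rintro x hx hx'
    obtain ⟨j, -, hj⟩ := Finset.mem_image.mp hx
    obtain ⟨j', -, hj'⟩ := Finset.mem_image.mp hx'
    exact hkk' (congrArg Prod.fst (hfinj (hj.trans hj'.symm)))
  · intro k
    rw [Finset.card_image_of_injective _ (fun j j' h => by
      simpa using congrArg Prod.snd (hfinj h))]
    simp
  · intro k j
    apply Finset.sum_pos'
    · intro i _; exact hnonneg i j
    · refine ⟨f (k, j), Finset.mem_image_of_mem _ (Finset.mem_univ j), ?_⟩
      have := hft (k, j)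
      rw [ht] at this
      simpa using this
end

section
/- Let X be a set, let dim be a function from subsets of X to ℤ ∪ {-∞} that is monotone (S ⊆ T implies dim S ≤ dim T) and satisfies dim(S ∪ T) = max(dim S, dim T) for all S, T ⊆ X, with dim ∅ = -∞. Let n ≥ 0 and let S_1, …, S_q ⊆ X be subsets such that for every I ⊆ {1, …, q} with |I| ≤ n + 1 one has dim(∩_{i ∈ I} S_i) ≤ n - |I|. Let I_1, …, I_m ⊆ {1, …, q} be nonempty pairwise disjoint subsets and set T_k = ∪_{i ∈ I_k} S_i. Then for every J ⊆ {1, …, m} with |J| ≤ n + 1, dim(∩_{k ∈ J} T_k) ≤ n - |J|. -/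
/-- Abstract general-position preservation: if `dim : Set X → ℤ ∪ {-∞}` is
monotone, turns finite unions into maxima and sends `∅` to `-∞`, the sets
`S i` satisfy the general position condition `dim (∩_{i∈I} S i) ≤ n - |I|` for
all `|I| ≤ n+1`, and `I 1, …, I m` are nonempty pairwise disjoint index sets
with `T k = ∪_{i ∈ I k} S i`, then the `T k` satisfy the same condition. -/
theorem stmt_12 (X : Type*) (dim : Set X → WithBot ℤ)
    (hmono : ∀ S T : Set X, S ⊆ T → dim S ≤ dim T)
    (hunion : ∀ S T : Set X, dim (S ∪ T) = max (dim S) (dim T))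
    (hempty : dim ∅ = ⊥)
    (n q m : ℕ) (S : Fin q → Set X)
    (hgp : ∀ I : Finset (Fin q), I.card ≤ n + 1 →
      dim (⋂ i ∈ I, S i) ≤ ((n : ℤ) - (I.card : ℤ) : ℤ))
    (I : Fin m → Finset (Fin q))
    (hne : ∀ k, (I k).Nonempty)
    (hdisj : ∀ k k', k ≠ k' → Disjoint (I k) (I k')) :
    ∀ J : Finset (Fin m), J.card ≤ n + 1 →
      dim (⋂ k ∈ J, ⋃ i ∈ I k, S i) ≤ ((n : ℤ) - (J.card : ℤ) : ℤ) := by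
  -- dim of a finite union is bounded if each piece is bounded
  have hbind : ∀ (c : WithBot ℤ) (A : Finset (Fin q)) (U : Fin q → Set X),
      (∀ i ∈ A, dim (U i) ≤ c) → dim (⋃ i ∈ A, U i) ≤ c := by
    intro c A U h
    induction A using Finset.induction_on with
    | empty => simpa [hempty] using (bot_le : (⊥ : WithBot ℤ) ≤ c)
    | @insert a A' ha ih =>
      rw [Finset.set_biUnion_insert, hunion]
      exact max_le (h a (Finset.mem_insert_self a A'))
        (ih fun i hi => h i (Finset.mem_insert_of_mem hi))
  have key : ∀ J : Finset (Fin m), ∀ K : Finset (Fin q),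
      (∀ k ∈ J, Disjoint (I k) K) → J.card + K.card ≤ n + 1 →
      dim ((⋂ i ∈ K, S i) ∩ ⋂ k ∈ J, ⋃ i ∈ I k, S i) ≤
        (((n : ℤ) - J.card - K.card : ℤ) : WithBot ℤ) := by
    intro J
    induction J using Finset.induction_on with
    | empty =>
      intro K _ hc
      have : ((⋂ i ∈ K, S i) ∩ ⋂ k ∈ (∅ : Finset (Fin m)), ⋃ i ∈ I k, S i)
          = ⋂ i ∈ K, S i := by simp
      rw [this]
      simpa using hgp K (by simpa using hc)
    | @insert a J ha ih =>
      intro K hdisjK hc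
      have hIaK : Disjoint (I a) K := hdisjK a (Finset.mem_insert_self a J)
      have hsub : ((⋂ i ∈ K, S i) ∩ ⋂ k ∈ insert a J, ⋃ i ∈ I k, S i)
          = ⋃ i ∈ I a, ((⋂ j ∈ insert i K, S j) ∩ ⋂ k ∈ J, ⋃ i' ∈ I k, S i') := by
        ext x
        simp only [Set.mem_inter_iff, Set.mem_iInter, Set.mem_iUnion,
          Finset.mem_insert, exists_prop]
        constructor
        · rintro ⟨hK, hins⟩
          obtain ⟨i, hi, hxi⟩ := by
            simpa using hins a (Or.inl rfl)
          exact ⟨i, hi, fun j hj => hj.elim (fun h => h ▸ hxi) (hK j),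
            fun k hk => hins k (Or.inr hk)⟩
        · rintro ⟨i, hi, hins, hJ⟩
          refine ⟨fun j hj => hins j (Or.inr hj), fun k hk => ?_⟩
          rcases hk with rfl | hk
          · exact ⟨i, hi, hins i (Or.inl rfl)⟩
          · exact hJ k hk
      rw [hsub]
      have hcard : (insert a J).card = J.card + 1 := Finset.card_insert_of_notMem ha
      apply hbind
      intro i hi
      have hiK : i ∉ K := Finset.disjoint_left.mp hIaK hi
      have hdisj' : ∀ k ∈ J, Disjoint (I k) (insert i K) := by
        intro k hk
        have hk' : Disjoint (I k) (I a) :=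
          hdisj k a (fun h => ha (h ▸ hk))
        rw [Finset.disjoint_insert_right]
        exact ⟨Finset.disjoint_right.mp hk' hi,
          hdisjK k (Finset.mem_insert_of_mem hk)⟩
      have hc' : J.card + (insert i K).card ≤ n + 1 := by
        rw [Finset.card_insert_of_notMem hiK]
        omega
      have := ih (insert i K) hdisj' hc'
      rw [Finset.card_insert_of_notMem hiK] at this
      refine this.trans ?_
      rw [hcard]
      push_cast
      exact le_of_eq (by ring_nf)
  intro J hJ
  have := key J ∅ (by simp) (by simpa using hJ)
  simpa using this
end
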